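/- The product ∘ on the vector space kP spanned by planar rooted trees, given on Dyck-word representatives by the asymmetric shuffle (inserting the irreducible components c_1,…,c_k of the word of T, preserving their relative order, into arbitrary positions of the word of T'), is associative: (a∘b)∘c = a∘(b∘c) for all a, b, c ∈ kP, with the one-vertex tree • as a two-sided unit. -/

import Mathlib

/-! ### Planar rooted trees -/

/-- A planar rooted tree: a root with an ordered list of branches.
`PTree.node [T₁,…,T_k]` is `B₊(T₁⋯T_k)`; `PTree.node []` is the one-vertex tree `•`. -/
inductive PTree : Type where
  | node : List PTree → PTree

instance : Inhabited PTree := ⟨.node []⟩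

noncomputable instance : DecidableEq PTree := Classical.decEq _

/-! ### Dyck words and the shuffle product on planar rooted trees -/

namespace PTree

/-- The Dyck word (balanced bracket arrangement) of a planar rooted tree:
`word (B₊(T₁⋯T_k)) = ⟨w₁⟩⟨w₂⟩⋯⟨w_k⟩` where `wᵢ` is the word of `Tᵢ`
(with `true = ⟨` and `false = ⟩`). -/
def word : PTree → List Bool
  | .node l => (l.attach.map (fun x => true :: (word x.1 ++ [false]))).flatten
decreasing_by
  have h := List.sizeOf_lt_of_mem x.2
  simp only [PTree.node.sizeOf_spec]
  omega

/-- The irreducible components `⟨w₁⟩,…,⟨w_k⟩` of the word of a planar rooted tree. -/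
def blocks : PTree → List (List Bool)
  | .node l => l.map (fun t => true :: (word t ++ [false]))

end PTree

/-- All words obtained by shuffling the given blocks (kept atomic and in their
relative order) into the given word. -/
def shuffles : List (List Bool) → List Bool → List (List Bool)
  | [], w => [w]
  | b :: bs, [] => (shuffles bs []).map (b ++ ·)
  | b :: bs, x :: w =>
      ((shuffles bs (x :: w)).map (b ++ ·)) ++ ((shuffles (b :: bs) w).map (x :: ·))
termination_by bs w => bs.length + w.length
decreasing_by all_goals simp +arith +decide

/-- Stack-based parser turning a balanced word into the forest it represents. -/
def parseAux : List Bool → List (List PTree) → List PTree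
  | [], stack => (stack.headD []).reverse
  | true :: w, stack => parseAux w ([] :: stack)
  | false :: w, stack =>
      match stack with
      | l :: l' :: rest => parseAux w ((PTree.node l.reverse :: l') :: rest)
      | _ => []

/-- The forest represented by a balanced word. -/
def parseForest (w : List Bool) : List PTree := parseAux w [[]]

/-- The planar rooted tree whose word is the given balanced word. -/
def parseTree (w : List Bool) : PTree := PTree.node (parseForest w)

/-- The product `∘` on `kP`: shuffle the irreducible components of the word of `T`
into the word of `T'` (so `• ∘ T' = T'`). -/
noncomputable def pMul (k : Type*) [Semiring k] (T T' : PTree) : PTree →₀ k :=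
  ((shuffles (PTree.blocks T) (PTree.word T')).map
    (fun w => Finsupp.single (parseTree w) (1 : k))).sum

/-- Bilinear extension of `∘` to `kP`. -/
noncomputable def pMulF {k : Type*} [CommSemiring k] (f g : PTree →₀ k) : PTree →₀ k :=
  f.sum (fun T a => g.sum (fun T' b => (a * b) • pMul k T T'))


/-! ### Auxiliary: depth run of a bracket word -/

def run : List Bool → Nat → Option Nat
  | [], n => some n
  | true :: w, n => run w (n + 1)
  | false :: w, n => match n with
    | 0 => none
    | m + 1 => run w m

def Bal (w : List Bool) : Prop := run w 0 = some 0

def IsBlock (b : List Bool) : Prop := ∃ u, Bal u ∧ b = true :: u ++ [false]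

lemma run_append (u v : List Bool) (n : Nat) :
    run (u ++ v) n = (run u n).bind (fun m => run v m) := by
  induction u generalizing n with
  | nil => simp [run]
  | cons x u ih =>
    cases x with
    | true => simpa [run] using ih (n + 1)
    | false =>
      cases n with
      | zero => simp [run]
      | succ m => simpa [run] using ih m

lemma run_add {u : List Bool} {n m : Nat} (k : Nat) (h : run u n = some m) :
    run u (n + k) = some (m + k) := by
  induction u generalizing n m with
  | nil => simp [run] at h ⊢; omega
  | cons x u ih =>
    cases x with
    | true =>
      have := ih (n := n + 1) (m := m) h
      simpa [run, Nat.add_right_comm] using this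
    | false =>
      cases n with
      | zero => simp [run] at h
      | succ l =>
        have := ih (n := l) (m := m) h
        simpa [run, Nat.succ_add, Nat.add_right_comm] using this

lemma IsBlock.run_eq {b : List Bool} (hb : IsBlock b) (n : Nat) : run b n = some n := by
  obtain ⟨u, hu, rfl⟩ := hb
  have h1 : run u (n + 1) = some (n + 1) := by
    simpa using run_add (n + 1) hu
  simp [run, run_append, h1]

lemma IsBlock.bal {b : List Bool} (hb : IsBlock b) : Bal b := hb.run_eq 0

lemma Bal.append {u v : List Bool} (hu : Bal u) (hv : Bal v) : Bal (u ++ v) := by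
  simp only [Bal, run_append] at *
  simp [hu, hv]

lemma Bal.block_append {u v : List Bool} (hu : IsBlock u) (hv : Bal v) : Bal (u ++ v) :=
  hu.bal.append hv

lemma bal_nil : Bal [] := rfl

lemma Bal.block_cons {u v : List Bool} (hu : Bal u) (hv : Bal v) :
    Bal (true :: u ++ false :: v) := by
  have : (true :: u ++ [false]) ++ v = true :: u ++ false :: v := by simp
  rw [← this]
  exact Bal.block_append ⟨u, hu, rfl⟩ hv

/-! ### Cutting a balanced word at the first return to depth zero -/

def cut : List Bool → Nat → List Bool × List Bool
  | [], _ => ([], [])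
  | false :: w, 0 => ([], w)
  | false :: w, n + 1 => ((cut w n).1.cons false, (cut w n).2)
  | true :: w, n => ((cut w (n + 1)).1.cons true, (cut w (n + 1)).2)

lemma cut_spec : ∀ (w : List Bool) (n : Nat), run w (n + 1) = some 0 →
    w = (cut w n).1 ++ false :: (cut w n).2 ∧
      (∀ d, n ≤ d → run (cut w n).1 d = some (d - n)) ∧ Bal (cut w n).2
  | [], n => by intro h; simp [run] at h
  | true :: w, n => by
    intro h
    obtain ⟨h1, h2, h3⟩ := cut_spec w (n + 1) (by simpa [run] using h)
    refine ⟨by simpa [cut] using congrArg (true :: ·) h1, ?_, h3⟩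
    intro d hd
    have := h2 (d + 1) (by omega)
    simp only [cut, run]
    rw [this]
    congr 1
    omega
  | false :: w, 0 => by
    intro h
    refine ⟨rfl, ?_, by simpa [run, Bal, cut] using h⟩
    intro d _
    simp [cut, run]
  | false :: w, n + 1 => by
    intro h
    obtain ⟨h1, h2, h3⟩ := cut_spec w n (by simpa [run] using h)
    refine ⟨by simpa [cut] using congrArg (false :: ·) h1, ?_, h3⟩
    intro d hd
    obtain ⟨e, rfl⟩ : ∃ e, d = e + 1 := ⟨d - 1, by omega⟩
    have := h2 e (by omega)
    simp only [cut, run]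
    rw [this]
    congr 1
    omega

/-- Induction principle for balanced words. -/
lemma Bal.induction {motive : List Bool → Prop} (h0 : motive [])
    (h1 : ∀ u v, Bal u → Bal v → motive u → motive v → motive (true :: u ++ false :: v)) :
    ∀ w, Bal w → motive w := by
  have key : ∀ (n : Nat) (w : List Bool), w.length ≤ n → Bal w → motive w := by
    intro n
    induction n with
    | zero =>
      intro w hw _
      rw [List.length_eq_zero_iff.mp (Nat.le_zero.mp hw)]
      exact h0
    | succ n ih =>
      intro w hw hb
      match w with
      | [] => exact h0
      | false :: w' => simp [Bal, run] at hb
      | true :: w' =>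
        have hr : run w' 1 = some 0 := by simpa [Bal, run] using hb
        obtain ⟨h1', h2', h3'⟩ := cut_spec w' 0 hr
        have hu : Bal (cut w' 0).1 := by simpa [Bal] using h2' 0 (le_refl 0)
        have hlen : w'.length ≤ n := by simpa using hw
        have l1 : (cut w' 0).1.length ≤ n := by
          have := congrArg List.length h1'
          simp at this; omega
        have l2 : (cut w' 0).2.length ≤ n := by
          have := congrArg List.length h1'
          simp at this; omega
        have := h1 _ _ hu h3' (ih _ l1 hu) (ih _ l2 h3')
        rw [h1']
        exact this
  exact fun w hw => key w.length w le_rfl hw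

/-! ### Shuffles preserve the depth run -/

lemma run_shuffles : ∀ (B : List (List Bool)) (w : List Bool), (∀ b ∈ B, IsBlock b) →
    ∀ v ∈ shuffles B w, ∀ n, run v n = run w n := by
  intro B w
  induction B, w using shuffles.induct with
  | case1 w =>
    intro _ v hv n
    simp [shuffles] at hv
    rw [hv]
  | case2 b bs ih =>
    intro hB v hv n
    rw [shuffles] at hv
    simp only [List.mem_map] at hv
    obtain ⟨v', hv', rfl⟩ := hv
    rw [run_append, (hB b (by simp)).run_eq n]
    exact ih (fun b hb => hB b (by simp [hb])) v' hv' n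
  | case3 b bs x w ih1 ih2 =>
    intro hB v hv n
    rw [shuffles] at hv
    simp only [List.mem_append, List.mem_map] at hv
    rcases hv with ⟨v', hv', rfl⟩ | ⟨v', hv', rfl⟩
    · rw [run_append, (hB b (by simp)).run_eq n]
      exact ih1 (fun b hb => hB b (by simp [hb])) v' hv' n
    · have h := ih2 hB v' hv'
      cases x with
      | true => simpa [run] using h (n + 1)
      | false =>
        cases n with
        | zero => simp [run]
        | succ m => simpa [run] using h m

lemma bal_shuffles {B : List (List Bool)} {w : List Bool} (hB : ∀ b ∈ B, IsBlock b)
    (hw : Bal w) {v : List Bool} (hv : v ∈ shuffles B w) : Bal v := by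
  unfold Bal
  rw [run_shuffles B w hB v hv 0]
  exact hw

/-! ### Words of trees -/

lemma word_node (l : List PTree) :
    PTree.word (.node l) = (l.map (fun t => true :: (PTree.word t ++ [false]))).flatten := by
  rw [PTree.word]
  congr 1
  simp

lemma word_blocks (T : PTree) : PTree.word T = (PTree.blocks T).flatten := by
  cases T with
  | node l => rw [word_node]; rfl

lemma bal_flatten_blocks : ∀ {L : List (List Bool)}, (∀ b ∈ L, IsBlock b) → Bal L.flatten := by
  intro L
  induction L with
  | nil => intro _; exact bal_nil
  | cons b L ih =>
    intro h
    rw [List.flatten_cons]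
    exact Bal.block_append (h b (by simp)) (ih fun b hb => h b (by simp [hb]))

theorem blocks_isBlock : ∀ (T : PTree), ∀ b ∈ PTree.blocks T, IsBlock b
  | .node l => by
    intro b hb
    rw [PTree.blocks] at hb
    simp only [List.mem_map] at hb
    obtain ⟨t, ht, rfl⟩ := hb
    refine ⟨PTree.word t, ?_, rfl⟩
    rw [word_blocks]
    exact bal_flatten_blocks (fun b hb => blocks_isBlock t b hb)
termination_by T => sizeOf T
decreasing_by
  have := List.sizeOf_lt_of_mem ht
  simp only [PTree.node.sizeOf_spec]
  omega

lemma bal_word (T : PTree) : Bal (PTree.word T) :=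
  word_blocks T ▸ bal_flatten_blocks (blocks_isBlock T)

/-! ### Parser correctness -/

lemma parseAux_main : ∀ w, Bal w → ∀ (rest : List Bool) (s : List PTree) (stack : List (List PTree)),
    parseAux (w ++ rest) (s :: stack) = parseAux rest (((parseForest w).reverse ++ s) :: stack) := by
  refine Bal.induction ?_ ?_
  · intro rest s stack
    simp [parseForest, parseAux]
  · intro u v hu hv ihu ihv rest s stack
    have chain : ∀ (r : List Bool) (s' : List PTree) (st : List (List PTree)),
        parseAux ((true :: u ++ false :: v) ++ r) (s' :: st)
        = parseAux r (((parseForest v).reverse ++ (PTree.node (parseForest u) :: s')) :: st) := by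
      intro r s' st
      have e1 : (true :: u ++ false :: v) ++ r = true :: (u ++ (false :: (v ++ r))) := by simp
      rw [e1]
      simp only [parseAux]
      rw [ihu (false :: (v ++ r)) [] (s' :: st)]
      simp only [parseAux]
      rw [ihv r _ st]
      simp
    have hf : parseForest (true :: u ++ false :: v)
        = PTree.node (parseForest u) :: parseForest v := by
      have h := chain [] [] []
      simp only [List.append_nil] at h
      rw [parseForest, h]
      simp [parseAux]
    rw [chain rest s stack, hf]
    simp

lemma parseForest_block {u v : List Bool} (hu : Bal u) (hv : Bal v) :
    parseForest (true :: u ++ false :: v) = PTree.node (parseForest u) :: parseForest v := by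
  have e1 : true :: u ++ false :: v = true :: (u ++ (false :: (v ++ []))) := by simp
  rw [parseForest, e1]
  simp only [parseAux]
  rw [parseAux_main u hu (false :: (v ++ [])) [] [[]]]
  simp only [parseAux]
  rw [parseAux_main v hv [] _ []]
  simp [parseAux]

lemma word_parseTree : ∀ {w : List Bool}, Bal w → PTree.word (parseTree w) = w := by
  intro w hw
  refine Bal.induction (motive := fun w => PTree.word (parseTree w) = w) ?_ ?_ w hw
  · simp [parseTree, parseForest, parseAux, word_node]
  · intro u v hu hv ihu ihv
    rw [parseTree, parseForest_block hu hv, word_node]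
    simp only [List.map_cons, List.flatten_cons]
    rw [show PTree.word (PTree.node (parseForest u)) = u from ihu]
    rw [show (List.map (fun t => true :: (PTree.word t ++ [false])) (parseForest v)).flatten
        = PTree.word (parseTree v) from (word_node _).symm]
    rw [show PTree.word (parseTree v) = v from ihv]
    simp

def comps (w : List Bool) : List (List Bool) := PTree.blocks (parseTree w)

lemma comps_nil : comps [] = [] := rfl

lemma comps_block_cons {u v : List Bool} (hu : Bal u) (hv : Bal v) :
    comps (true :: u ++ false :: v) = (true :: u ++ [false]) :: comps v := by
  rw [comps, parseTree, parseForest_block hu hv, PTree.blocks]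
  rw [List.map_cons]
  rw [show PTree.node (parseForest u) = parseTree u from rfl, word_parseTree hu]
  rfl

lemma comps_flatten_append : ∀ {L : List (List Bool)} {v : List Bool},
    (∀ b ∈ L, IsBlock b) → Bal v → comps (L.flatten ++ v) = L ++ comps v := by
  intro L
  induction L with
  | nil => intro v _ _; simp
  | cons b L ih =>
    intro v hL hv
    obtain ⟨u, hu, rfl⟩ := hL b (by simp)
    have e : ((true :: u ++ [false]) :: L).flatten ++ v = true :: u ++ false :: (L.flatten ++ v) := by
      simp
    rw [e, comps_block_cons hu (bal_flatten_blocks (fun b hb => hL b (by simp [hb])) |>.append hv)]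
    rw [ih (fun b hb => hL b (by simp [hb])) hv]
    simp

lemma comps_flatten {L : List (List Bool)} (hL : ∀ b ∈ L, IsBlock b) : comps L.flatten = L := by
  have := comps_flatten_append hL bal_nil
  simpa [comps_nil] using this

lemma parseForest_word : ∀ (l : List PTree),
    parseForest ((l.map (fun t => true :: (PTree.word t ++ [false]))).flatten) = l
  | [] => rfl
  | .node m :: l => by
    rw [List.map_cons, List.flatten_cons]
    have e : (true :: (PTree.word (.node m) ++ [false]))
          ++ ((l.map (fun t => true :: (PTree.word t ++ [false]))).flatten)
        = true :: PTree.word (.node m)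
          ++ false :: ((l.map (fun t => true :: (PTree.word t ++ [false]))).flatten) := by
      simp
    rw [e, parseForest_block (bal_word _) (by rw [← word_node]; exact bal_word _)]
    rw [parseForest_word l]
    congr 1
    rw [word_node, parseForest_word m]
termination_by l => sizeOf l
decreasing_by
  all_goals simp only [List.cons.sizeOf_spec, PTree.node.sizeOf_spec]; omega

lemma parseTree_word (T : PTree) : parseTree (PTree.word T) = T := by
  cases T with
  | node l =>
    rw [parseTree, word_node, parseForest_word]

lemma comps_word (T : PTree) : comps (PTree.word T) = PTree.blocks T := by
  rw [comps, parseTree_word]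

/-! ### Splits and the strict shuffle -/

def splits {α : Type} : List α → List (List α × List α)
  | [] => [([], [])]
  | x :: w => ([], x :: w) :: (splits w).map (fun p => (x :: p.1, p.2))

lemma splits_mem {α : Type} : ∀ {w : List α} {p : List α × List α},
    p ∈ splits w → p.1 ++ p.2 = w := by
  intro w
  induction w with
  | nil => intro p hp; simp [splits] at hp; simp [hp]
  | cons x w ih =>
    intro p hp
    simp only [splits, List.mem_cons, List.mem_map] at hp
    rcases hp with rfl | ⟨q, hq, rfl⟩
    · rfl
    · simpa using ih hq

def shufflesLt : List (List Bool) → List Bool → List (List Bool)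
  | [], w => [w]
  | _ :: _, [] => []
  | b :: bs, x :: w =>
      ((shufflesLt bs (x :: w)).map (b ++ ·)) ++ ((shufflesLt (b :: bs) w).map (x :: ·))
termination_by bs w => bs.length + w.length
decreasing_by all_goals simp +arith +decide

lemma shuffles_nil (w : List Bool) : shuffles [] w = [w] := by rw [shuffles]

lemma shuffles_nil_right : ∀ (B : List (List Bool)), shuffles B [] = [B.flatten]
  | [] => by simp [shuffles_nil]
  | b :: B => by rw [shuffles, shuffles_nil_right B]; simp

lemma shufflesLt_nil (w : List Bool) : shufflesLt [] w = [w] := by rw [shufflesLt]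

lemma shufflesLt_cons_nil (b : List Bool) (B : List (List Bool)) :
    shufflesLt (b :: B) [] = [] := by rw [shufflesLt]

lemma coeAppend {α : Type} (l1 l2 : List α) :
    ((l1 ++ l2 : List α) : Multiset α) = (l1 : Multiset α) + (l2 : Multiset α) :=
  (Multiset.coe_add _ _).symm

lemma coeMap {α β : Type} (f : α → β) (l : List α) :
    ((l.map f : List β) : Multiset β) = Multiset.map f (l : Multiset α) := rfl

lemma coeConsM {α : Type} (a : α) (l : List α) :
    ((a :: l : List α) : Multiset α) = a ::ₘ (l : Multiset α) :=
  (Multiset.cons_coe _ _).symm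

/-! ### Multiset identities for shuffles -/

lemma msh_cons (b : List Bool) (B : List (List Bool)) (w : List Bool) :
    (shuffles (b :: B) w : Multiset (List Bool))
      = (splits w : Multiset (List Bool × List Bool)).bind
          (fun p => (shuffles B p.2 : Multiset (List Bool)).map (fun z => p.1 ++ b ++ z)) := by
  induction w with
  | nil =>
    rw [shuffles]
    simp only [splits, Multiset.coe_singleton, Multiset.singleton_bind, coeMap]
    simp
  | cons x w ih =>
    rw [shuffles]
    simp only [splits, coeAppend, coeMap, coeConsM, Multiset.cons_bind, Multiset.bind_map,
      ih, Multiset.map_bind, Multiset.map_map, Function.comp, List.nil_append,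
      List.cons_append, List.append_assoc]

lemma splits_splits_left {α β : Type} : ∀ (w : List α)
    (f : List α → List α → List α → Multiset β),
    (splits w : Multiset (List α × List α)).bind
        (fun p => (splits p.1 : Multiset (List α × List α)).bind (fun q => f q.1 q.2 p.2))
      = (splits w : Multiset (List α × List α)).bind
        (fun p => (splits p.2 : Multiset (List α × List α)).bind (fun q => f p.1 q.1 q.2)) := by
  intro w
  induction w with
  | nil =>
    intro f
    simp only [splits, Multiset.coe_singleton, Multiset.singleton_bind]
  | cons c w ih =>
    intro f
    have e1 : ∀ p : List α × List α,
        ((splits (c :: p.1) : Multiset (List α × List α)).bind (fun q => f q.1 q.2 p.2))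
        = f [] (c :: p.1) p.2
          + (splits p.1 : Multiset (List α × List α)).bind (fun q => f (c :: q.1) q.2 p.2) := by
      intro p
      simp only [splits, coeConsM, Multiset.cons_bind, coeMap, Multiset.bind_map]
    simp only [splits, coeConsM, Multiset.cons_bind, coeMap, Multiset.bind_map, e1,
      Multiset.bind_add]
    rw [ih (fun a b c' => f (c :: a) b c')]
    simp only [Multiset.coe_nil, Multiset.zero_bind, add_zero, add_assoc]

lemma msh_append_mid (C1 : List (List Bool)) (c : List Bool) (C2 : List (List Bool)) :
    ∀ (w : List Bool),
    (shuffles (C1 ++ c :: C2) w : Multiset (List Bool))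
      = (splits w : Multiset (List Bool × List Bool)).bind (fun p =>
          (shuffles C1 p.1 : Multiset (List Bool)).bind (fun α =>
            (shuffles C2 p.2 : Multiset (List Bool)).map (fun ζ => α ++ c ++ ζ))) := by
  induction C1 with
  | nil =>
    intro w
    rw [List.nil_append, msh_cons]
    refine Multiset.bind_congr (fun p _ => ?_)
    rw [shuffles_nil p.1]
    simp only [Multiset.coe_singleton, Multiset.singleton_bind]
  | cons b C1 ih =>
    intro w
    rw [List.cons_append, msh_cons]
    have e1 : ∀ p : List Bool × List Bool,
        ((shuffles (C1 ++ c :: C2) p.2 : Multiset (List Bool)).map (fun z => p.1 ++ b ++ z))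
        = (splits p.2 : Multiset (List Bool × List Bool)).bind (fun q =>
            (shuffles C1 q.1 : Multiset (List Bool)).bind (fun α =>
              (shuffles C2 q.2 : Multiset (List Bool)).map
                (fun ζ => p.1 ++ b ++ (α ++ c ++ ζ)))) := by
      intro p
      rw [ih p.2]
      simp only [Multiset.map_bind, Multiset.map_map, Function.comp, List.append_assoc]
    simp only [e1]
    rw [← splits_splits_left _
      (fun x y z => (shuffles C1 y : Multiset (List Bool)).bind (fun α =>
        (shuffles C2 z : Multiset (List Bool)).map (fun ζ => x ++ b ++ (α ++ c ++ ζ))))]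
    refine Multiset.bind_congr (fun p _ => ?_)
    rw [msh_cons]
    simp only [Multiset.bind_map, Multiset.bind_assoc, List.append_assoc]

lemma msh_seam (B : List (List Bool)) (s : List Bool) (t : List Bool) :
    (shuffles B (s ++ t) : Multiset (List Bool))
      = (splits B : Multiset (List (List Bool) × List (List Bool))).bind (fun p =>
          (shufflesLt p.1 s : Multiset (List Bool)).bind (fun β =>
            (shuffles p.2 t : Multiset (List Bool)).map (fun ρ => β ++ ρ))) := by
  induction B, s using shuffles.induct with
  | case1 s =>
    rw [shuffles_nil (s ++ t)]
    simp [splits, shufflesLt_nil, shuffles_nil, Multiset.coe_singleton, Multiset.singleton_bind]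
  | case2 b B _ =>
    rw [List.nil_append]
    have e0 : ∀ q : List Bool × List (List Bool) × List (List Bool), True := fun _ => trivial
    have e1 : ∀ q : List (List Bool) × List (List Bool),
        ((shufflesLt (b :: q.1) [] : Multiset (List Bool)).bind (fun β =>
          (shuffles q.2 t : Multiset (List Bool)).map (fun ρ => β ++ ρ))) = 0 := by
      intro q
      rw [shufflesLt_cons_nil b q.1]
      simp
    simp only [splits, coeConsM, Multiset.cons_bind, coeMap, Multiset.bind_map, e1,
      Multiset.bind_zero, add_zero]
    rw [shufflesLt_nil []]
    simp
  | case3 b B x s ih1 ih2 =>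
    simp only [List.cons_append] at ih1 ⊢
    rw [shuffles]
    simp only [coeAppend, coeMap]
    rw [ih1, ih2]
    have e1 : ∀ p : List (List Bool) × List (List Bool),
        ((shufflesLt (b :: p.1) (x :: s) : Multiset (List Bool)).bind (fun β =>
          (shuffles p.2 t : Multiset (List Bool)).map (fun ρ => β ++ ρ)))
        = (shufflesLt p.1 (x :: s) : Multiset (List Bool)).bind (fun β =>
            (shuffles p.2 t : Multiset (List Bool)).map (fun ρ => b ++ (β ++ ρ)))
          + (shufflesLt (b :: p.1) s : Multiset (List Bool)).bind (fun β =>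
            (shuffles p.2 t : Multiset (List Bool)).map (fun ρ => x :: (β ++ ρ))) := by
      intro p
      rw [shufflesLt]
      simp only [coeAppend, coeMap, Multiset.add_bind, Multiset.bind_map, List.append_assoc,
        List.cons_append]
    conv_rhs => rw [show splits (b :: B)
      = ([], b :: B) :: (splits B).map (fun p => (b :: p.1, p.2)) from rfl]
    simp only [splits, coeConsM, Multiset.cons_bind, coeMap, Multiset.bind_map, e1,
      Multiset.bind_add, Multiset.map_bind, Multiset.map_map, Multiset.map_add,
      Function.comp, List.cons_append, List.append_assoc]
    rw [shufflesLt_nil (x :: s),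
      shufflesLt_nil s]
    simp only [coeConsM, Multiset.coe_nil, Multiset.cons_bind, Multiset.zero_bind, add_zero,
      Multiset.map_map, Function.comp, List.cons_append, List.append_assoc]
    abel

lemma mshLt_snoc (B : List (List Bool)) (p : List Bool) (x : Bool) :
    (shufflesLt B (p ++ [x]) : Multiset (List Bool))
      = (shuffles B p : Multiset (List Bool)).map (fun z => z ++ [x]) := by
  induction B, p using shuffles.induct with
  | case1 p => rw [shuffles_nil p, shufflesLt_nil (p ++ [x])]; simp
  | case2 b B ih =>
    simp only [List.nil_append] at ih ⊢
    rw [shufflesLt, shuffles, shufflesLt_cons_nil b B]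
    simp only [coeAppend, coeMap]
    rw [ih]
    simp only [Multiset.coe_nil, Multiset.map_zero, add_zero, Multiset.map_map,
      Function.comp, List.append_assoc]
  | case3 b B y p ih1 ih2 =>
    simp only [List.cons_append] at ih1 ⊢
    rw [shufflesLt, shuffles]
    simp only [coeAppend, coeMap]
    rw [ih1, ih2]
    simp only [Multiset.map_add, Multiset.map_map, Function.comp,
      List.cons_append, List.append_assoc]

lemma mshLt_block (B : List (List Bool)) (p : List Bool) :
    (shufflesLt B (true :: p ++ [false]) : Multiset (List Bool))
      = (splits B : Multiset (List (List Bool) × List (List Bool))).bind (fun q =>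
          (shuffles q.2 p : Multiset (List Bool)).map
            (fun γ => q.1.flatten ++ (true :: γ ++ [false]))) := by
  induction B with
  | nil =>
    rw [shufflesLt_nil (true :: p ++ [false])]
    simp [splits, shuffles_nil, Multiset.coe_singleton, Multiset.singleton_bind]
  | cons b B ih =>
    simp only [List.cons_append] at ih ⊢
    rw [shufflesLt]
    simp only [coeAppend, coeMap]
    rw [ih, mshLt_snoc (b :: B) p false]
    simp only [splits, coeAppend, coeMap, coeConsM, Multiset.cons_bind, Multiset.bind_map,
      Multiset.map_bind, Multiset.map_map, Multiset.map_add, Function.comp, List.flatten_cons,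
      List.cons_append, List.append_assoc, List.flatten_nil, List.nil_append]
    rw [add_comm]

lemma msh_eq_lt (C : List (List Bool)) (x : List Bool) :
    (shuffles C x : Multiset (List Bool))
      = (splits C : Multiset (List (List Bool) × List (List Bool))).bind (fun q =>
          (shufflesLt q.1 x : Multiset (List Bool)).map (fun β => β ++ q.2.flatten)) := by
  induction C, x using shuffles.induct with
  | case1 x =>
    rw [shuffles_nil x]
    simp [splits, shufflesLt_nil, Multiset.coe_singleton, Multiset.singleton_bind]
  | case2 c C ih =>
    rw [shuffles_nil_right]
    have e1 : ∀ q : List (List Bool) × List (List Bool),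
        ((shufflesLt (c :: q.1) [] : Multiset (List Bool)).map (fun β => β ++ q.2.flatten)) = 0 := by
      intro q
      rw [shufflesLt_cons_nil c q.1]
      simp
    simp only [splits, coeConsM, Multiset.cons_bind, coeMap, Multiset.bind_map, e1,
      Multiset.bind_zero, add_zero]
    rw [shufflesLt_nil []]
    simp
  | case3 c C y x ih1 ih2 =>
    rw [shuffles]
    simp only [coeAppend, coeMap]
    rw [ih1, ih2]
    have e1 : ∀ q : List (List Bool) × List (List Bool),
        ((shufflesLt (c :: q.1) (y :: x) : Multiset (List Bool)).map (fun β => β ++ q.2.flatten))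
        = (shufflesLt q.1 (y :: x) : Multiset (List Bool)).map (fun β => c ++ (β ++ q.2.flatten))
          + (shufflesLt (c :: q.1) x : Multiset (List Bool)).map (fun β => y :: (β ++ q.2.flatten)) := by
      intro q
      rw [shufflesLt]
      simp only [coeAppend, coeMap, Multiset.map_add, Multiset.map_map, Function.comp,
        List.cons_append, List.append_assoc]
    conv_rhs => rw [show splits (c :: C)
      = ([], c :: C) :: (splits C).map (fun p => (c :: p.1, p.2)) from rfl]
    simp only [coeAppend, coeMap, coeConsM, Multiset.cons_bind, Multiset.bind_map, e1,
      Multiset.bind_add, Multiset.map_bind, Multiset.map_map, Multiset.map_add,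
      Function.comp, List.cons_append, List.append_assoc]
    rw [shufflesLt_nil (y :: x)]
    simp only [coeConsM, Multiset.coe_nil, Multiset.map_cons, Multiset.map_zero,
      List.cons_append, List.append_assoc]
    simp only [splits, coeConsM, Multiset.cons_bind, coeMap, Multiset.bind_map,
      shufflesLt_nil, Multiset.coe_singleton, Multiset.singleton_bind, Multiset.coe_nil,
      Multiset.map_cons, Multiset.map_zero, Multiset.map_singleton,
      List.cons_append, List.append_assoc]
    abel

/-! ### The main combinatorial identity -/

def S (B : List (List Bool)) (w : List Bool) : Multiset (List Bool) :=
  (shuffles B w : Multiset (List Bool))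

def T (B : List (List Bool)) (w : List Bool) : Multiset (List Bool) :=
  (shufflesLt B w : Multiset (List Bool))

def SP {α : Type} (l : List α) : Multiset (List α × List α) :=
  (splits l : Multiset (List α × List α))

lemma S_nil (w : List Bool) : S [] w = {w} := by
  rw [S, shuffles_nil]; rfl

lemma S_nil_right (B : List (List Bool)) : S B [] = {B.flatten} := by
  rw [S, shuffles_nil_right]; rfl

lemma S_cons (b : List Bool) (B : List (List Bool)) (w : List Bool) :
    S (b :: B) w = (SP w).bind (fun p => (S B p.2).map (fun z => p.1 ++ b ++ z)) :=
  msh_cons b B w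

lemma S_mid (C1 : List (List Bool)) (c : List Bool) (C2 : List (List Bool)) (w : List Bool) :
    S (C1 ++ c :: C2) w
      = (SP w).bind (fun p => (S C1 p.1).bind (fun α => (S C2 p.2).map (fun ζ => α ++ c ++ ζ))) :=
  msh_append_mid C1 c C2 w

lemma S_seam (B : List (List Bool)) (s t : List Bool) :
    S B (s ++ t)
      = (SP B).bind (fun pr => (T pr.1 s).bind (fun β => (S pr.2 t).map (fun ρ => β ++ ρ))) :=
  msh_seam B s t

lemma T_block (B : List (List Bool)) (p : List Bool) :
    T B (true :: p ++ [false])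
      = (SP B).bind (fun q => (S q.2 p).map (fun γ => q.1.flatten ++ (true :: γ ++ [false]))) :=
  mshLt_block B p

lemma S_lt (C : List (List Bool)) (x : List Bool) :
    S C x = (SP C).bind (fun q => (T q.1 x).map (fun β => β ++ q.2.flatten)) :=
  msh_eq_lt C x

lemma SP_splits_left {α β : Type} (w : List α) (f : List α → List α → List α → Multiset β) :
    (SP w).bind (fun p => (SP p.1).bind (fun q => f q.1 q.2 p.2))
      = (SP w).bind (fun p => (SP p.2).bind (fun q => f p.1 q.1 q.2)) :=
  splits_splits_left w f

lemma expand_lt (C : List (List Bool)) (x : List Bool) (G : List Bool → Multiset (List Bool)) :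
    (S C x).bind G
      = (SP C).bind (fun rr => (T rr.1 x).bind (fun δ => G (δ ++ rr.2.flatten))) := by
  rw [S_lt]
  simp only [Multiset.bind_assoc, Multiset.bind_map]

lemma mem_S {B : List (List Bool)} {w v : List Bool} (h : v ∈ S B w) : v ∈ shuffles B w :=
  Multiset.mem_coe.mp h

lemma mem_SP {α : Type} {l : List α} {pr : List α × List α} (h : pr ∈ SP l) :
    pr.1 ++ pr.2 = l :=
  splits_mem (Multiset.mem_coe.mp h)

lemma splits4 {α β : Type} (B : List α)
    (F : List α → List α → List α → List α → Multiset β) :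
    (SP B).bind (fun pr => (SP pr.1).bind (fun qr =>
      (SP qr.1).bind (fun rr => F rr.1 rr.2 qr.2 pr.2)))
  = (SP B).bind (fun pr => (SP pr.2).bind (fun qr =>
      (SP qr.1).bind (fun rr => F pr.1 rr.1 rr.2 qr.2))) := by
  rw [SP_splits_left B (fun a b c => (SP a).bind (fun rr => F rr.1 rr.2 b c))]
  have h1 : ∀ pr : List α × List α,
      ((SP pr.2).bind (fun qr => (SP pr.1).bind (fun rr => F rr.1 rr.2 qr.1 qr.2)))
        = (SP pr.1).bind (fun rr => (SP pr.2).bind (fun qr => F rr.1 rr.2 qr.1 qr.2)) :=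
    fun pr => Multiset.bind_bind _ _
  simp only [h1]
  rw [SP_splits_left B (fun a b c => (SP c).bind (fun qr => F a b qr.1 qr.2))]
  refine Multiset.bind_congr (fun pr _ => ?_)
  exact (SP_splits_left pr.2 (fun a b c => F pr.1 a b c)).symm

/-- Step A: the component decomposition of a single shuffled word. -/
lemma stepA {qr1 : List (List Bool)} (hqr1 : ∀ b ∈ qr1, IsBlock b)
    {γ ρ : List Bool} (hγ : Bal γ) (hρ : Bal ρ) (w'' : List Bool) :
    S (comps (qr1.flatten ++ (true :: γ ++ [false]) ++ ρ)) w''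
      = (SP w'').bind (fun xy => (S qr1 xy.1).bind (fun α =>
          (S (comps ρ) xy.2).map (fun ζ => α ++ (true :: (γ ++ false :: ζ))))) := by
  have e1 : qr1.flatten ++ (true :: γ ++ [false]) ++ ρ
      = qr1.flatten ++ (true :: γ ++ false :: ρ) := by simp
  rw [e1, comps_flatten_append hqr1 (hγ.block_cons hρ), comps_block_cons hγ hρ]
  rw [S_mid]
  refine Multiset.bind_congr (fun xy _ => Multiset.bind_congr (fun α _ => ?_))
  refine Multiset.map_congr rfl (fun ζ _ => by simp)

/-- Step B: the inner transformation of the left-hand side. -/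
lemma stepB (p q w'' : List Bool) (hp : Bal p) (hq : Bal q)
    (pr2 qr1 qr2 : List (List Bool))
    (hpr2 : ∀ b ∈ pr2, IsBlock b) (hqr1 : ∀ b ∈ qr1, IsBlock b)
    (hqr2 : ∀ b ∈ qr2, IsBlock b)
    (hind : ∀ y, (S pr2 q).bind (fun ρ => S (comps ρ) y)
        = (S (comps q) y).bind (fun u => S pr2 u)) :
    (S qr2 p).bind (fun γ => (S pr2 q).bind (fun ρ =>
        S (comps (qr1.flatten ++ (true :: γ ++ [false]) ++ ρ)) w''))
    = (SP qr1).bind (fun rr => (SP w'').bind (fun xy => (T rr.1 xy.1).bind (fun δ =>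
        (S (comps q) xy.2).bind (fun u => (S qr2 p).bind (fun γ =>
          (S pr2 u).map (fun z => δ ++ (rr.2.flatten ++ (true :: (γ ++ false :: z))))))))) := by
  have hfold : ∀ (y : List Bool) (g : List Bool → List Bool),
      (S pr2 q).bind (fun ρ => (S (comps ρ) y).map g)
        = (S (comps q) y).bind (fun u => (S pr2 u).map g) := by
    intro y g
    rw [← Multiset.map_bind, hind y, Multiset.map_bind]
  have h1 : (S qr2 p).bind (fun γ => (S pr2 q).bind (fun ρ =>
        S (comps (qr1.flatten ++ (true :: γ ++ [false]) ++ ρ)) w''))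
      = (S qr2 p).bind (fun γ => (S pr2 q).bind (fun ρ =>
          (SP w'').bind (fun xy => (S qr1 xy.1).bind (fun α =>
            (S (comps ρ) xy.2).map (fun ζ => α ++ (true :: (γ ++ false :: ζ))))))) := by
    refine Multiset.bind_congr (fun γ hγ => Multiset.bind_congr (fun ρ hρ => ?_))
    exact stepA hqr1 (bal_shuffles hqr2 hp (mem_S hγ)) (bal_shuffles hpr2 hq (mem_S hρ)) w''
  rw [h1]
  have raise_xy : ∀ {σ : Type} (M : Multiset σ) (G : σ → List Bool × List Bool → Multiset (List Bool)),
      M.bind (fun a => (SP w'').bind (fun xy => G a xy))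
        = (SP w'').bind (fun xy => M.bind (fun a => G a xy)) :=
    fun M G => Multiset.bind_bind M (SP w'')
  simp only [raise_xy]
  refine Multiset.bind_congr (fun xy _ => ?_)
  have sink_ρ : ∀ {σ : Type} (M : Multiset σ) (G : List Bool → σ → Multiset (List Bool)),
      (S pr2 q).bind (fun ρ => M.bind (fun a => G ρ a))
        = M.bind (fun a => (S pr2 q).bind (fun ρ => G ρ a)) :=
    fun M G => Multiset.bind_bind (S pr2 q) M
  simp only [sink_ρ]
  simp only [hfold]
  simp only [expand_lt qr1]
  have raise_rr : ∀ {σ : Type} (M : Multiset σ)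
      (G : σ → List (List Bool) × List (List Bool) → Multiset (List Bool)),
      M.bind (fun a => (SP qr1).bind (fun rr => G a rr))
        = (SP qr1).bind (fun rr => M.bind (fun a => G a rr)) :=
    fun M G => Multiset.bind_bind M (SP qr1)
  simp only [raise_rr]
  refine Multiset.bind_congr (fun rr _ => ?_)
  have sink_γ : ∀ {σ : Type} (M : Multiset σ) (G : List Bool → σ → Multiset (List Bool)),
      (S qr2 p).bind (fun γ => M.bind (fun a => G γ a))
        = M.bind (fun a => (S qr2 p).bind (fun γ => G γ a)) :=
    fun M G => Multiset.bind_bind (S qr2 p) M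
  simp only [sink_γ]
  simp only [List.append_assoc, List.cons_append, List.nil_append, List.singleton_append]

theorem main_identity : ∀ (w' : List Bool), Bal w' → ∀ (B : List (List Bool)),
    (∀ b ∈ B, IsBlock b) → ∀ (w'' : List Bool),
    (S B w').bind (fun v => S (comps v) w'')
      = (S (comps w') w'').bind (fun u => S B u) := by
  refine Bal.induction ?_ ?_
  · intro B hB w''
    rw [S_nil_right, comps_nil, S_nil, Multiset.singleton_bind, Multiset.singleton_bind,
      comps_flatten hB]
  · intro p q hp hq _ ihq B hB w''
    have hL : (S B ((true :: p ++ [false]) ++ q)).bind (fun v => S (comps v) w'')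
        = (SP B).bind (fun pr => (SP pr.1).bind (fun qr => (SP qr.1).bind (fun rr =>
            (SP w'').bind (fun xy => (T rr.1 xy.1).bind (fun δ =>
              (S (comps q) xy.2).bind (fun u => (S qr.2 p).bind (fun γ =>
                (S pr.2 u).map (fun z =>
                  δ ++ (rr.2.flatten ++ (true :: (γ ++ false :: z))))))))))) := by
      rw [S_seam B (true :: p ++ [false]) q]
      simp only [Multiset.bind_assoc, Multiset.bind_map]
      refine Multiset.bind_congr (fun pr hpr => ?_)
      have hsp := mem_SP hpr
      have hpr1 : ∀ b ∈ pr.1, IsBlock b := fun b hb =>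
        hB b (by rw [← hsp]; exact List.mem_append_left _ hb)
      have hpr2 : ∀ b ∈ pr.2, IsBlock b := fun b hb =>
        hB b (by rw [← hsp]; exact List.mem_append_right _ hb)
      rw [T_block pr.1 p]
      simp only [Multiset.bind_assoc, Multiset.bind_map]
      refine Multiset.bind_congr (fun qr hqr => ?_)
      have hsq := mem_SP hqr
      have hqr1 : ∀ b ∈ qr.1, IsBlock b := fun b hb =>
        hpr1 b (by rw [← hsq]; exact List.mem_append_left _ hb)
      have hqr2 : ∀ b ∈ qr.2, IsBlock b := fun b hb =>
        hpr1 b (by rw [← hsq]; exact List.mem_append_right _ hb)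
      exact stepB p q w'' hp hq pr.2 qr.1 qr.2 hpr2 hqr1 hqr2 (fun y => ihq pr.2 hpr2 y)
    have hR : (S ((true :: p ++ [false]) :: comps q) w'').bind (fun u => S B u)
        = (SP B).bind (fun pr => (SP pr.2).bind (fun qr => (SP qr.1).bind (fun rr =>
            (SP w'').bind (fun xy => (T pr.1 xy.1).bind (fun δ =>
              (S (comps q) xy.2).bind (fun u => (S rr.2 p).bind (fun γ =>
                (S qr.2 u).map (fun z =>
                  δ ++ (rr.1.flatten ++ (true :: (γ ++ false :: z))))))))))) := by
      rw [S_cons (true :: p ++ [false]) (comps q) w'']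
      simp only [Multiset.bind_assoc, Multiset.bind_map]
      have hre := fun (x z : List Bool) => List.append_assoc x (true :: p ++ [false]) z
      simp only [hre]
      simp only [S_seam]
      simp only [T_block]
      simp only [Multiset.bind_assoc, Multiset.bind_map, Multiset.map_bind, Multiset.map_map]
      have raise_pr : ∀ {σ : Type} (M : Multiset σ)
          (G : σ → List (List Bool) × List (List Bool) → Multiset (List Bool)),
          M.bind (fun a => (SP B).bind (fun pr => G a pr))
            = (SP B).bind (fun pr => M.bind (fun a => G a pr)) :=
        fun M G => Multiset.bind_bind M (SP B)
      simp only [raise_pr]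
      refine Multiset.bind_congr (fun pr _ => ?_)
      have raise_qr : ∀ {σ : Type} (M : Multiset σ)
          (G : σ → List (List Bool) × List (List Bool) → Multiset (List Bool)),
          M.bind (fun a => (SP pr.2).bind (fun qr => G a qr))
            = (SP pr.2).bind (fun qr => M.bind (fun a => G a qr)) :=
        fun M G => Multiset.bind_bind M (SP pr.2)
      simp only [raise_qr]
      refine Multiset.bind_congr (fun qr _ => ?_)
      have raise_rr : ∀ {σ : Type} (M : Multiset σ)
          (G : σ → List (List Bool) × List (List Bool) → Multiset (List Bool)),
          M.bind (fun a => (SP qr.1).bind (fun rr => G a rr))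
            = (SP qr.1).bind (fun rr => M.bind (fun a => G a rr)) :=
        fun M G => Multiset.bind_bind M (SP qr.1)
      simp only [raise_rr]
      refine Multiset.bind_congr (fun rr _ => ?_)
      refine Multiset.bind_congr (fun xy _ => ?_)
      have raise_δ : ∀ {σ : Type} (M : Multiset σ)
          (G : σ → List Bool → Multiset (List Bool)),
          M.bind (fun a => (T pr.1 xy.1).bind (fun δ => G a δ))
            = (T pr.1 xy.1).bind (fun δ => M.bind (fun a => G a δ)) :=
        fun M G => Multiset.bind_bind M (T pr.1 xy.1)
      simp only [raise_δ]
      simp only [Function.comp, List.append_assoc, List.cons_append, List.nil_append,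
        List.singleton_append]
    have hE := splits4 B (fun a b c d =>
      (SP w'').bind (fun xy => (T a xy.1).bind (fun δ =>
        (S (comps q) xy.2).bind (fun u => (S c p).bind (fun γ =>
          (S d u).map (fun z => δ ++ (b.flatten ++ (true :: (γ ++ false :: z)))))))))
    rw [comps_block_cons hp hq]
    rw [show (true :: p ++ false :: q) = (true :: p ++ [false]) ++ q from by simp]
    exact hL.trans (hE.trans hR.symm)

/-! ### Glue: from the multiset identity to the bilinear product on kP -/

section Glue

variable (k : Type*) [CommSemiring k]

/-- Sum of basis vectors indexed by a multiset of balanced words. -/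
noncomputable def Phi (m : Multiset (List Bool)) : PTree →₀ k :=
  (m.map (fun w => Finsupp.single (parseTree w) (1 : k))).sum

lemma Phi_zero : Phi k 0 = 0 := rfl

lemma Phi_add (m n : Multiset (List Bool)) : Phi k (m + n) = Phi k m + Phi k n := by
  simp [Phi]

lemma Phi_singleton (w : List Bool) : Phi k {w} = Finsupp.single (parseTree w) (1 : k) := by
  simp [Phi]

lemma pMul_eq_Phi (T T' : PTree) :
    pMul k T T' = Phi k (S (PTree.blocks T) (PTree.word T')) := by
  rw [pMul, Phi, S]
  rw [Multiset.map_coe, Multiset.sum_coe]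

lemma Phi_bind (m : Multiset (List Bool)) (g : List Bool → Multiset (List Bool)) :
    Phi k (m.bind g) = (m.map (fun w => Phi k (g w))).sum := by
  induction m using Multiset.induction_on with
  | empty => simp [Phi_zero]
  | cons w m ih =>
    rw [Multiset.cons_bind, Phi_add, ih, Multiset.map_cons, Multiset.sum_cons]

/-! Bilinearity of `pMulF`. -/

lemma pMulF_zero_left (g : PTree →₀ k) : pMulF (0 : PTree →₀ k) g = 0 := by
  simp [pMulF]

lemma pMulF_zero_right (f : PTree →₀ k) : pMulF f (0 : PTree →₀ k) = 0 := by
  simp [pMulF]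

lemma pMulF_single_left (T : PTree) (x : k) (g : PTree →₀ k) :
    pMulF (Finsupp.single T x) g = g.sum (fun T' b => (x * b) • pMul k T T') := by
  rw [pMulF]
  refine Finsupp.sum_single_index ?_
  simp

lemma pMulF_single_single (T T' : PTree) (x y : k) :
    pMulF (Finsupp.single T x) (Finsupp.single T' y) = (x * y) • pMul k T T' := by
  rw [pMulF_single_left]
  refine Finsupp.sum_single_index ?_
  simp

lemma pMulF_add_left (f₁ f₂ g : PTree →₀ k) :
    pMulF (f₁ + f₂) g = pMulF f₁ g + pMulF f₂ g := by
  rw [pMulF, pMulF, pMulF]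
  refine Finsupp.sum_add_index' ?_ ?_
  · intro T; simp
  · intro T x₁ x₂
    rw [← Finsupp.sum_add]
    congr 1
    funext T' b
    rw [add_mul, add_smul]

lemma pMulF_add_right (f g₁ g₂ : PTree →₀ k) :
    pMulF f (g₁ + g₂) = pMulF f g₁ + pMulF f g₂ := by
  rw [pMulF, pMulF, pMulF, ← Finsupp.sum_add]
  congr 1
  funext T x
  refine Finsupp.sum_add_index' ?_ ?_
  · intro T'; simp
  · intro T' y₁ y₂
    rw [mul_add, add_smul]

lemma pMulF_smul_left (c : k) (f g : PTree →₀ k) :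
    pMulF (c • f) g = c • pMulF f g := by
  rw [pMulF, pMulF, Finsupp.smul_sum]
  rw [Finsupp.sum_smul_index]
  · refine Finsupp.sum_congr (fun T _ => ?_)
    rw [Finsupp.smul_sum]
    refine Finsupp.sum_congr (fun T' _ => ?_)
    rw [smul_smul, mul_assoc]
  · intro T; simp

lemma pMulF_smul_right (c : k) (f g : PTree →₀ k) :
    pMulF f (c • g) = c • pMulF f g := by
  rw [pMulF, pMulF, Finsupp.smul_sum]
  refine Finsupp.sum_congr (fun T x => ?_)
  rw [Finsupp.smul_sum, Finsupp.sum_smul_index]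
  · refine Finsupp.sum_congr (fun T' y => ?_)
    rw [smul_smul, mul_left_comm]
  · intro T'; simp

lemma pMulF_Phi_left (m : Multiset (List Bool)) (g : PTree →₀ k) :
    pMulF (Phi k m) g = (m.map (fun w => pMulF (Finsupp.single (parseTree w) (1 : k)) g)).sum := by
  induction m using Multiset.induction_on with
  | empty => simp [Phi_zero, pMulF_zero_left]
  | cons w m ih =>
    rw [show Phi k (w ::ₘ m) = Finsupp.single (parseTree w) (1 : k) + Phi k m by
      rw [Phi, Multiset.map_cons, Multiset.sum_cons]; rfl]
    rw [pMulF_add_left, ih, Multiset.map_cons, Multiset.sum_cons]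

lemma pMulF_Phi_right (m : Multiset (List Bool)) (f : PTree →₀ k) :
    pMulF f (Phi k m) = (m.map (fun w => pMulF f (Finsupp.single (parseTree w) (1 : k)))).sum := by
  induction m using Multiset.induction_on with
  | empty => simp [Phi_zero, pMulF_zero_right]
  | cons w m ih =>
    rw [show Phi k (w ::ₘ m) = Finsupp.single (parseTree w) (1 : k) + Phi k m by
      rw [Phi, Multiset.map_cons, Multiset.sum_cons]; rfl]
    rw [pMulF_add_right, ih, Multiset.map_cons, Multiset.sum_cons]

/-- The core associativity computation on basis elements with coefficient 1. -/
lemma pMulF_core (T T' T'' : PTree) :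
    pMulF (pMul k T T') (Finsupp.single T'' (1 : k))
      = pMulF (Finsupp.single T (1 : k)) (pMul k T' T'') := by
  rw [pMul_eq_Phi, pMul_eq_Phi, pMulF_Phi_left, pMulF_Phi_right]
  have hL : ∀ w : List Bool,
      pMulF (Finsupp.single (parseTree w) (1 : k)) (Finsupp.single T'' (1 : k))
        = Phi k (S (comps w) (PTree.word T'')) := by
    intro w
    rw [pMulF_single_single, one_mul, one_smul, pMul_eq_Phi]
    rfl
  have hR : ∀ u ∈ S (PTree.blocks T') (PTree.word T''),
      pMulF (Finsupp.single T (1 : k)) (Finsupp.single (parseTree u) (1 : k))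
        = Phi k (S (PTree.blocks T) u) := by
    intro u hu
    rw [pMulF_single_single, one_mul, one_smul, pMul_eq_Phi]
    rw [word_parseTree (bal_shuffles (blocks_isBlock T') (bal_word T'') (mem_S hu))]
  rw [Multiset.map_congr rfl (fun w _ => hL w), Multiset.map_congr rfl hR]
  rw [← Phi_bind, ← Phi_bind]
  congr 1
  have h := main_identity (PTree.word T') (bal_word T') (PTree.blocks T)
    (blocks_isBlock T) (PTree.word T'')
  rw [comps_word] at h
  exact h

lemma assoc_single (T T' T'' : PTree) (x y z : k) :
    pMulF (pMulF (Finsupp.single T x) (Finsupp.single T' y)) (Finsupp.single T'' z)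
      = pMulF (Finsupp.single T x) (pMulF (Finsupp.single T' y) (Finsupp.single T'' z)) := by
  have e1 : Finsupp.single T x = x • Finsupp.single T (1 : k) := by
    rw [Finsupp.smul_single, smul_eq_mul, mul_one]
  have e2 : Finsupp.single T' y = y • Finsupp.single T' (1 : k) := by
    rw [Finsupp.smul_single, smul_eq_mul, mul_one]
  have e3 : Finsupp.single T'' z = z • Finsupp.single T'' (1 : k) := by
    rw [Finsupp.smul_single, smul_eq_mul, mul_one]
  rw [e1, e2, e3]
  simp only [pMulF_smul_left, pMulF_smul_right]
  rw [pMulF_single_single, one_mul, one_smul, pMulF_single_single, one_mul, one_smul]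
  rw [pMulF_core]

theorem pMulF_assoc (a b c : PTree →₀ k) :
    pMulF (pMulF a b) c = pMulF a (pMulF b c) := by
  induction a using Finsupp.induction with
  | zero => simp [pMulF_zero_left]
  | single_add T x f _ _ iha =>
    rw [pMulF_add_left, pMulF_add_left, pMulF_add_left, iha]
    congr 1
    clear iha
    induction b using Finsupp.induction with
    | zero => simp [pMulF_zero_left, pMulF_zero_right]
    | single_add T' y g _ _ ihb =>
      rw [pMulF_add_right, pMulF_add_left, pMulF_add_left, pMulF_add_right, ihb]
      congr 1
      clear ihb
      induction c using Finsupp.induction with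
      | zero => simp [pMulF_zero_right]
      | single_add T'' z h _ _ ihc =>
        rw [pMulF_add_right, pMulF_add_right, pMulF_add_right, ihc]
        congr 1
        exact assoc_single k T T' T'' x y z

lemma word_one : PTree.word (PTree.node []) = [] := by
  rw [word_node]; rfl

lemma blocks_one : PTree.blocks (PTree.node []) = [] := rfl

lemma pMulF_one_left_single (T : PTree) (x : k) :
    pMulF (Finsupp.single (PTree.node []) (1 : k)) (Finsupp.single T x) = Finsupp.single T x := by
  rw [pMulF_single_single, one_mul, pMul_eq_Phi, blocks_one, S_nil, Phi_singleton,
    parseTree_word, Finsupp.smul_single, smul_eq_mul, mul_one]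

lemma pMulF_one_right_single (T : PTree) (x : k) :
    pMulF (Finsupp.single T x) (Finsupp.single (PTree.node []) (1 : k)) = Finsupp.single T x := by
  rw [pMulF_single_single, mul_one, pMul_eq_Phi, word_one, S_nil_right, Phi_singleton,
    ← word_blocks, parseTree_word, Finsupp.smul_single, smul_eq_mul, mul_one]

theorem pMulF_one (a : PTree →₀ k) :
    pMulF (Finsupp.single (PTree.node []) (1 : k)) a = a ∧
      pMulF a (Finsupp.single (PTree.node []) (1 : k)) = a := by
  induction a using Finsupp.induction with
  | zero => simp [pMulF_zero_left, pMulF_zero_right]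
  | single_add T x f _ _ ih =>
    refine ⟨?_, ?_⟩
    · rw [pMulF_add_right, ih.1, pMulF_one_left_single]
    · rw [pMulF_add_left, ih.2, pMulF_one_right_single]

end Glue

/-- The asymmetric-shuffle product `∘` on the span `kP` of planar
rooted trees is associative, with the one-vertex tree `•` as two-sided unit. -/
theorem kP_product_associative (k : Type*) [Field k] [CharZero k] :
    (∀ a b c : PTree →₀ k, pMulF (pMulF a b) c = pMulF a (pMulF b c)) ∧
    (∀ a : PTree →₀ k,
      pMulF (Finsupp.single (PTree.node []) (1 : k)) a = a ∧
      pMulF a (Finsupp.single (PTree.node []) (1 : k)) = a) := by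
  constructor
  · exact fun a b c => pMulF_assoc k a b c
  · exact fun a => pMulF_one k a
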